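/- Let Z = (∑ Y)_p for 1 ≤ p < ∞ with shifts L, R and coordinate projections Pᵢ. For any T ∈ L(Z) and any i, j ≥ 0, the series ∑_{n=0}^∞ Rⁿ (Pᵢ T Pⱼ) Lⁿ converges strongly (i.e., pointwise in norm) to a bounded operator on Z. -/

import Mathlib

set_option maxHeartbeats 1000000


open ENNReal Filter Topology

section Aux

variable {Y : Type*} [NormedAddCommGroup Y] [NormedSpace ℂ Y] [CompleteSpace Y]
  (p : ℝ≥0∞) [Fact (1 ≤ p)]

lemma aux_single_zero (k : ℕ) : lp.single (E := fun _ : ℕ => Y) p k (0 : Y) = (0 : lp (fun _ : ℕ => Y) p) := by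
  apply lp.ext
  funext m
  rw [lp.single_apply]
  simp

/-- For each `x`, the partial sums converge to some limit. -/
lemma aux_exists_limit (hp : p ≠ ∞)
    (L R : lp (fun _ : ℕ => Y) p →L[ℂ] lp (fun _ : ℕ => Y) p)
    (P : ℕ → (lp (fun _ : ℕ => Y) p →L[ℂ] lp (fun _ : ℕ => Y) p))
    (hL : ∀ (f : lp (fun _ : ℕ => Y) p) (n : ℕ), L f n = f (n + 1))
    (hR0 : ∀ f : lp (fun _ : ℕ => Y) p, R f 0 = 0)
    (hR : ∀ (f : lp (fun _ : ℕ => Y) p) (n : ℕ), R f (n + 1) = f n)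
    (hP : ∀ (i : ℕ) (f : lp (fun _ : ℕ => Y) p) (n : ℕ), P i f n = if n = i then f n else 0)
    (T : lp (fun _ : ℕ => Y) p →L[ℂ] lp (fun _ : ℕ => Y) p) (i j : ℕ)
    (x : lp (fun _ : ℕ => Y) p) :
    ∃ F : lp (fun _ : ℕ => Y) p,
      Tendsto (fun N => ∑ n ∈ Finset.range N, (R ^ n * (P i * T * P j) * L ^ n) x)
        atTop (𝓝 F) := by
  have hp0 : p ≠ 0 := (zero_lt_one.trans_le (Fact.out (p := 1 ≤ p))).ne'
  have hq : 0 < p.toReal := ENNReal.toReal_pos hp0 hp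
  -- iterated left shift
  have hLn : ∀ (n : ℕ) (f : lp (fun _ : ℕ => Y) p) (k : ℕ), (L ^ n) f k = f (k + n) := by
    intro n
    induction n with
    | zero => intro f k; simp
    | succ n ih =>
      intro f k
      have : (L ^ (n + 1)) f = (L ^ n) (L f) := by
        rw [pow_succ, ContinuousLinearMap.mul_apply]
      rw [this, ih, hL]
      congr 1
  -- projections as singles
  have hPj : ∀ (m : ℕ) (f : lp (fun _ : ℕ => Y) p), P m f = lp.single (E := fun _ : ℕ => Y) p m (f m) := by
    intro m f
    apply lp.ext
    funext k
    rw [hP]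
    by_cases h : k = m
    · subst h; rw [if_pos rfl, lp.single_apply_self]
    · rw [if_neg h, lp.single_apply_ne p m _ h]
  -- iterated right shift on singles
  have hRn : ∀ (n m : ℕ) (u : Y),
      (R ^ n) (lp.single (E := fun _ : ℕ => Y) p m u) = lp.single (E := fun _ : ℕ => Y) p (m + n) u := by
    intro n
    induction n with
    | zero => intro m u; simp
    | succ n ih =>
      intro m u
      have h1 : (R ^ (n + 1)) (lp.single (E := fun _ : ℕ => Y) p m u) = R ((R ^ n) (lp.single (E := fun _ : ℕ => Y) p m u)) := by
        rw [pow_succ', ContinuousLinearMap.mul_apply]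
      rw [h1, ih]
      apply lp.ext
      funext k
      match k with
      | 0 =>
        rw [hR0]
        exact (lp.single_apply_ne (E := fun _ : ℕ => Y) p (m + (n + 1)) u
          (show (0:ℕ) ≠ m + (n + 1) by omega)).symm
      | Nat.succ k =>
        rw [hR]
        by_cases h : k = m + n
        · subst h
          rw [lp.single_apply_self]
          exact (lp.single_apply_self (E := fun _ : ℕ => Y) p (m + (n + 1)) u).symm
        · rw [lp.single_apply_ne (E := fun _ : ℕ => Y) p (m + n) u h,
            lp.single_apply_ne (E := fun _ : ℕ => Y) p (m + (n + 1)) u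
              (show k + 1 ≠ m + (n + 1) by omega)]
  -- the terms
  set y : ℕ → Y := fun n => (T (lp.single (E := fun _ : ℕ => Y) p j (x (j + n)))) i with hy
  have hterm : ∀ n, (R ^ n * (P i * T * P j) * L ^ n) x = lp.single (E := fun _ : ℕ => Y) p (i + n) (y n) := by
    intro n
    rw [ContinuousLinearMap.mul_apply, ContinuousLinearMap.mul_apply,
      ContinuousLinearMap.mul_apply, ContinuousLinearMap.mul_apply]
    have h1 : P j ((L ^ n) x) = lp.single (E := fun _ : ℕ => Y) p j (x (j + n)) := by
      rw [hPj, hLn]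
    rw [h1, hPj, hRn]
  -- the limit function
  set g : ℕ → Y := fun k => if h : i ≤ k then y (k - i) else 0 with hg
  have hyle : ∀ n, ‖y n‖ ≤ ‖T‖ * ‖x (j + n)‖ := by
    intro n
    calc ‖y n‖ ≤ ‖T (lp.single (E := fun _ : ℕ => Y) p j (x (j + n)))‖ :=
          lp.norm_apply_le_norm (E := fun _ : ℕ => Y) hp0 (T (lp.single (E := fun _ : ℕ => Y) p j (x (j + n)))) i
      _ ≤ ‖T‖ * ‖lp.single (E := fun _ : ℕ => Y) p j (x (j + n))‖ := T.le_opNorm _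
      _ = ‖T‖ * ‖x (j + n)‖ := by
          exact congrArg (‖T‖ * ·) (lp.norm_single (E := fun _ : ℕ => Y) (pos_iff_ne_zero.mpr hp0) j (x (j + n)))
  have hsumx : Summable fun n : ℕ => ‖x (j + n)‖ ^ p.toReal := by
    have h := ((lp.memℓp x).summable hq)
    exact h.comp_injective (add_right_injective j)
  have hsumy : Summable fun n : ℕ => ‖y n‖ ^ p.toReal := by
    apply Summable.of_nonneg_of_le
      (fun n => Real.rpow_nonneg (norm_nonneg _) _)
      (fun n => ?_) (hsumx.mul_left (‖T‖ ^ p.toReal))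
    calc ‖y n‖ ^ p.toReal ≤ (‖T‖ * ‖x (j + n)‖) ^ p.toReal :=
          Real.rpow_le_rpow (norm_nonneg _) (hyle n) hq.le
      _ = ‖T‖ ^ p.toReal * ‖x (j + n)‖ ^ p.toReal :=
          Real.mul_rpow (norm_nonneg _) (norm_nonneg _)
  have hinj : Function.Injective (fun n : ℕ => i + n) := add_right_injective i
  have hvanish : ∀ k ∉ Set.range (fun n : ℕ => i + n), g k = 0 := by
    intro k hk
    simp only [hg]
    rw [dif_neg]
    intro h
    exact hk ⟨k - i, by show i + (k - i) = k; omega⟩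
  have hgcomp : ∀ n : ℕ, g (i + n) = y n := by
    intro n
    simp only [hg]
    rw [dif_pos (by omega)]
    congr 1
    omega
  have hmem : Memℓp g p := by
    apply memℓp_gen
    rw [← Function.Injective.summable_iff hinj (f := fun k => ‖g k‖ ^ p.toReal)
      (fun k hk => by
        have h0 := hvanish k hk
        simp only [h0, norm_zero, Real.zero_rpow hq.ne'])]
    have : (fun k => ‖g k‖ ^ p.toReal) ∘ (fun n : ℕ => i + n)
        = fun n => ‖y n‖ ^ p.toReal := by
      funext n
      simp only [Function.comp_apply, hgcomp]
    rw [this]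
    exact hsumy
  set F : lp (fun _ : ℕ => Y) p := ⟨g, hmem⟩ with hF
  refine ⟨F, ?_⟩
  have hsum : HasSum (fun k => lp.single (E := fun _ : ℕ => Y) p k (F k)) F := lp.hasSum_single hp F
  have hsum1 := (Function.Injective.hasSum_iff hinj
      (f := fun k => lp.single (E := fun _ : ℕ => Y) p k (F k)) (a := F)
      (fun k hk => by
        have h0 : (F : ∀ _ : ℕ, Y) k = 0 := hvanish k hk
        simp only [h0, hvanish k hk, aux_single_zero])).mpr hsum
  have hcomp : ((fun k => lp.single (E := fun _ : ℕ => Y) p k (F k)) ∘ fun n : ℕ => i + n)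
      = fun n : ℕ => lp.single (E := fun _ : ℕ => Y) p (i + n) (y n) := by
    funext n
    exact congrArg (lp.single (E := fun _ : ℕ => Y) p (i + n)) (hgcomp n)
  have hsum2 : HasSum (fun n : ℕ => lp.single (E := fun _ : ℕ => Y) p (i + n) (y n)) F := hcomp ▸ hsum1
  have heq : (fun N => ∑ n ∈ Finset.range N, (R ^ n * (P i * T * P j) * L ^ n) x)
      = fun N => ∑ n ∈ Finset.range N, lp.single (E := fun _ : ℕ => Y) p (i + n) (y n) := by
    funext N
    exact Finset.sum_congr rfl fun n _ => hterm n
  rw [heq]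
  exact hsum2.tendsto_sum_nat

end Aux

/-- For `Z = (∑ Y)_p`, `1 ≤ p < ∞`, any `T ∈ L(Z)` and any `i, j`, the series
`∑ₙ Rⁿ (Pᵢ T Pⱼ) Lⁿ` converges strongly to a bounded operator. -/
theorem strong_convergence_PiTPj {Y : Type*} [NormedAddCommGroup Y] [NormedSpace ℂ Y]
    [CompleteSpace Y] (p : ℝ≥0∞) [Fact (1 ≤ p)] (hp : p ≠ ∞)
    (L R : lp (fun _ : ℕ => Y) p →L[ℂ] lp (fun _ : ℕ => Y) p)
    (P : ℕ → (lp (fun _ : ℕ => Y) p →L[ℂ] lp (fun _ : ℕ => Y) p))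
    (hL : ∀ (f : lp (fun _ : ℕ => Y) p) (n : ℕ), L f n = f (n + 1))
    (hR0 : ∀ f : lp (fun _ : ℕ => Y) p, R f 0 = 0)
    (hR : ∀ (f : lp (fun _ : ℕ => Y) p) (n : ℕ), R f (n + 1) = f n)
    (hP : ∀ (i : ℕ) (f : lp (fun _ : ℕ => Y) p) (n : ℕ), P i f n = if n = i then f n else 0)
    (T : lp (fun _ : ℕ => Y) p →L[ℂ] lp (fun _ : ℕ => Y) p) (i j : ℕ) :
    ∃ S : lp (fun _ : ℕ => Y) p →L[ℂ] lp (fun _ : ℕ => Y) p,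
      ∀ x : lp (fun _ : ℕ => Y) p,
        Tendsto (fun N => ∑ n ∈ Finset.range N, (R ^ n * (P i * T * P j) * L ^ n) x)
          atTop (𝓝 (S x)) := by
  have hex := aux_exists_limit p hp L R P hL hR0 hR hP T i j
  choose f hf using hex
  set G : ℕ → (lp (fun _ : ℕ => Y) p →L[ℂ] lp (fun _ : ℕ => Y) p) :=
    fun N => ∑ n ∈ Finset.range N, (R ^ n * (P i * T * P j) * L ^ n) with hG
  have hGx : ∀ (N : ℕ) (x : lp (fun _ : ℕ => Y) p),
      G N x = ∑ n ∈ Finset.range N, (R ^ n * (P i * T * P j) * L ^ n) x := by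
    intro N x
    simp [hG]
  have htend : Tendsto (fun N x => G N x) atTop (𝓝 f) := by
    rw [tendsto_pi_nhds]
    intro x
    have := hf x
    convert this using 2 with N
    exact hGx N x
  refine ⟨continuousLinearMapOfTendsto G htend, fun x => ?_⟩
  have hSx : continuousLinearMapOfTendsto G htend x = f x := rfl
  rw [hSx]
  exact hf x
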